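/- In a generalized sun graph, every second vertex along the outer Hamiltonian cycle is either a central vertex or a vertex of degree 2; that is, the degree-2 vertices and central vertices can be indexed so that they occupy exactly the odd positions along the Hamiltonian cycle. -/

import Mathlib

open SimpleGraph

/-- A diagonal (chord) of a convex `n`-gon with vertices `0, …, n-1` in cyclic order,
recorded as a pair `(i, j)` with `i < j`, joining two non-adjacent vertices. -/
def IsDiag (n : ℕ) (p : ℕ × ℕ) : Prop :=
  p.1 < p.2 ∧ p.2 < n ∧ 2 ≤ p.2 - p.1 ∧ p.2 - p.1 ≤ n - 2

/-- Two diagonals of a convex polygon cross (in their interiors). -/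
def Crosses (p q : ℕ × ℕ) : Prop :=
  (p.1 < q.1 ∧ q.1 < p.2 ∧ p.2 < q.2) ∨ (q.1 < p.1 ∧ p.1 < q.2 ∧ q.2 < p.2)

/-- A triangulation of a convex `n`-gon: `n - 3` pairwise non-crossing diagonals.
This is the standard combinatorial presentation of a maximal outerplanar graph on
`n` vertices (the polygon boundary is the outer Hamiltonian cycle). -/
structure PolyTriangulation (n : ℕ) where
  diags : Finset (ℕ × ℕ)
  isDiag : ∀ p ∈ diags, IsDiag n p
  noncross : ∀ p ∈ diags, ∀ q ∈ diags, ¬ Crosses p q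
  card_eq : diags.card = n - 3

/-- The maximal outerplanar graph on `Fin n` given by a polygon triangulation:
the boundary Hamiltonian cycle `v_i v_{i+1}` together with the diagonals. -/
def PolyTriangulation.graph {n : ℕ} (T : PolyTriangulation n) : SimpleGraph (Fin n) :=
  SimpleGraph.fromRel (fun i j =>
    (i.val + 1) % n = j.val ∨ (min i.val j.val, max i.val j.val) ∈ T.diags)

/-- `S` is a total dominating set of `G`: every vertex has a neighbor in `S`. -/
def IsTotalDom {V : Type*} (G : SimpleGraph V) (S : Set V) : Prop :=
  ∀ v, ∃ u ∈ S, G.Adj v u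

/-- `G` has two disjoint total dominating sets (total domatic number at least 2). -/
def HasTwoTDS {V : Type*} (G : SimpleGraph V) : Prop :=
  ∃ S₁ S₂ : Set V, Disjoint S₁ S₂ ∧ IsTotalDom G S₁ ∧ IsTotalDom G S₂

/-- The degree of a vertex in the maximal outerplanar graph of a triangulation. -/
noncomputable def pdeg {n : ℕ} (T : PolyTriangulation n) (v : Fin n) : ℕ :=
  (T.graph.neighborSet v).ncard

/-- A central vertex: no degree-2 vertex in its closed neighborhood, and indexing the
vertices cyclically starting from `v`, all neighbors of `v` have pairwise congruent
indices mod 4. -/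
def IsCentral {n : ℕ} (T : PolyTriangulation n) (v : Fin n) : Prop :=
  (∀ u, (u = v ∨ T.graph.Adj v u) → pdeg T u ≠ 2) ∧
  (∀ u w, T.graph.Adj v u → T.graph.Adj v w →
    ((u.val + n - v.val) % n) % 4 = ((w.val + n - v.val) % n) % 4)

/-- A generalized sun graph: a maximal outerplanar graph of order `n ≡ 2 (mod 4)`
in which the number of degree-2 vertices plus central vertices equals `n / 2`. -/
def IsGenSun {n : ℕ} (T : PolyTriangulation n) : Prop :=
  n % 4 = 2 ∧
  ({v : Fin n | pdeg T v = 2}.ncard + {v : Fin n | IsCentral T v}.ncard = n / 2)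

namespace Stmt11Aux

variable {n : ℕ}

/-- Edge relation on the polygon, as ordered pairs of natural indices, including
the "closing" boundary edge `(0, n-1)`. -/
def Edg (T : PolyTriangulation n) (x y : ℕ) : Prop :=
  x < y ∧ (y = x + 1 ∨ (x, y) ∈ T.diags ∨ (x = 0 ∧ y = n - 1))

/-- Symmetric form of `Edg`. -/
def EdgS (T : PolyTriangulation n) (x y : ℕ) : Prop := Edg T x y ∨ Edg T y x

/-- Diagonals lying within the interval `[a,b]`, including `(a,b)` itself. -/
def filterIncl (T : PolyTriangulation n) (a b : ℕ) : Finset (ℕ × ℕ) :=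
  T.diags.filter (fun p => a ≤ p.1 ∧ p.2 ≤ b)

/-- Diagonals lying strictly within the interval `[a,b]` (excluding `(a,b)`). -/
def innerD (T : PolyTriangulation n) (a b : ℕ) : Finset (ℕ × ℕ) :=
  T.diags.filter (fun p => a ≤ p.1 ∧ p.2 ≤ b ∧ p ≠ (a, b))

lemma filterIncl_card (T : PolyTriangulation n) (a b : ℕ) :
    (filterIncl T a b).card =
      (innerD T a b).card + (if (a, b) ∈ T.diags then 1 else 0) := by
  by_cases h : (a, b) ∈ T.diags
  · rw [if_pos h]
    have : filterIncl T a b = insert (a, b) (innerD T a b) := by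
      ext p
      simp only [filterIncl, innerD, Finset.mem_insert, Finset.mem_filter]
      constructor
      · rintro ⟨hp, h1, h2⟩
        by_cases hpe : p = (a, b)
        · exact Or.inl hpe
        · exact Or.inr ⟨hp, h1, h2, hpe⟩
      · rintro (rfl | ⟨hp, h1, h2, _⟩)
        · exact ⟨h, le_refl _, le_refl _⟩
        · exact ⟨hp, h1, h2⟩
    rw [this, Finset.card_insert_of_notMem]
    simp [innerD]
  · rw [if_neg h]
    congr 1
    ext p
    simp only [filterIncl, innerD, Finset.mem_filter]
    constructor
    · rintro ⟨hp, h1, h2⟩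
      refine ⟨hp, h1, h2, ?_⟩
      rintro rfl; exact h hp
    · rintro ⟨hp, h1, h2, _⟩; exact ⟨hp, h1, h2⟩

/-- The key splitting vertex: the largest `k` with `a < k < b` such that `(a,k)` is
an edge (either `k = a+1` or a diagonal). -/
lemma split_vertex (T : PolyTriangulation n) (a b : ℕ) (hab : a + 2 ≤ b) :
    ∃ k, a < k ∧ k < b ∧ (k = a + 1 ∨ (a, k) ∈ T.diags) ∧
      (∀ p ∈ filterIncl T a b, p.2 ≤ k ∨ k ≤ p.1 ∨ p = (a, b)) := by
  classical
  set K : Finset ℕ := (Finset.range b).filter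
    (fun x => a < x ∧ (x = a + 1 ∨ (a, x) ∈ T.diags)) with hK
  have hne : K.Nonempty := by
    refine ⟨a + 1, ?_⟩
    rw [hK, Finset.mem_filter, Finset.mem_range]
    exact ⟨by omega, by omega, Or.inl rfl⟩
  set k := K.max' hne with hk
  have hkmem : k ∈ K := K.max'_mem hne
  simp only [hK, Finset.mem_filter, Finset.mem_range] at hkmem
  obtain ⟨hkb, hak, hedge⟩ := hkmem
  refine ⟨k, hak, hkb, hedge, ?_⟩
  intro p hp
  simp only [filterIncl, Finset.mem_filter] at hp
  obtain ⟨hpd, hap, hpb⟩ := hp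
  obtain ⟨hlt, hp2, hgap, _⟩ := T.isDiag p hpd
  by_contra hcon
  push_neg at hcon
  obtain ⟨h1, h2, h3⟩ := hcon
  -- so p.1 < k < p.2
  have hp1k : p.1 < k := by omega
  have hkp2 : k < p.2 := by omega
  by_cases hp1a : p.1 = a
  · -- then p.2 > k, p.2 ≤ b, p ≠ (a,b) so p.2 < b, and (a, p.2) ∈ diags: contradicts max
    have hp2b : p.2 < b := by
      rcases lt_or_eq_of_le hpb with h | h
      · exact h
      · exfalso; apply h3; ext <;> simp [hp1a, h]
    have : p.2 ∈ K := by
      simp only [hK, Finset.mem_filter, Finset.mem_range]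
      refine ⟨hp2b, by omega, Or.inr ?_⟩
      have : p = (a, p.2) := by ext <;> simp [hp1a]
      rwa [← this]
    have := K.le_max' _ this
    omega
  · -- p.1 > a, so (a,k) ∈ diags (k ≠ a+1 since p.1 < k, p.1 > a) and crossing
    have hk1 : (a, k) ∈ T.diags := by
      rcases hedge with h | h
      · omega
      · exact h
    have : Crosses (a, k) p := by
      left
      exact ⟨by omega, hp1k, hkp2⟩
    exact T.noncross _ hk1 _ hpd this

/-- Bound: the number of diagonals inside `[a,b]` (including `(a,b)`) is at most
`b - a - 1`. -/
lemma filterIncl_bound (T : PolyTriangulation n) :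
    ∀ d a b, b = a + d → 1 ≤ d → (filterIncl T a b).card ≤ d - 1 := by
  intro d
  induction d using Nat.strong_induction_on with
  | _ d ih =>
    intro a b hb hd
    rcases Nat.lt_or_ge d 2 with hd2 | hd2
    · -- d = 1 : empty
      interval_cases d
      have : filterIncl T a b = ∅ := by
        rw [Finset.eq_empty_iff_forall_notMem]
        intro p hp
        simp only [filterIncl, Finset.mem_filter] at hp
        obtain ⟨hpd, h1, h2⟩ := hp
        obtain ⟨hlt, _, hgap, _⟩ := T.isDiag p hpd
        omega
      simp [this]
    · obtain ⟨k, hak, hkb, hedge, hsplit⟩ := split_vertex T a b (by omega)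
      have hsub : filterIncl T a b ⊆
          (filterIncl T a k ∪ filterIncl T k b) ∪ {(a, b)} := by
        intro p hp
        have hm := hp
        simp only [filterIncl, Finset.mem_filter] at hm
        obtain ⟨hpd, h1, h2⟩ := hm
        rcases hsplit p hp with h | h | h
        · simp only [Finset.mem_union, Finset.mem_singleton]
          left; left
          simp only [filterIncl, Finset.mem_filter]
          exact ⟨hpd, h1, h⟩
        · simp only [Finset.mem_union, Finset.mem_singleton]
          left; right
          simp only [filterIncl, Finset.mem_filter]
          exact ⟨hpd, h, h2⟩
        · simp [h]
      have hcard := Finset.card_le_card hsub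
      have hc1 := Finset.card_union_le (filterIncl T a k ∪ filterIncl T k b) {(a, b)}
      have hc2 := Finset.card_union_le (filterIncl T a k) (filterIncl T k b)
      have hL := ih (k - a) (by omega) a k (by omega) (by omega)
      have hR := ih (b - k) (by omega) k b (by omega) (by omega)
      have : ({((a : ℕ), (b : ℕ))} : Finset (ℕ × ℕ)).card = 1 := Finset.card_singleton _
      omega

end Stmt11Aux
namespace Stmt11Aux

variable {n : ℕ}

lemma innerD_bound (T : PolyTriangulation n) (a b : ℕ) :
    (innerD T a b).card ≤ b - a - 2 := by
  rcases Nat.lt_or_ge b (a + 2) with h | h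
  · -- interval too small: innerD is empty
    have : innerD T a b = ∅ := by
      rw [Finset.eq_empty_iff_forall_notMem]
      intro p hp
      simp only [innerD, Finset.mem_filter] at hp
      obtain ⟨hpd, h1, h2, h3⟩ := hp
      obtain ⟨hlt, _, hgap, _⟩ := T.isDiag p hpd
      have : p = (a, b) := by
        have : p.1 = a ∧ p.2 = b := by omega
        ext <;> simp [this.1, this.2]
      exact h3 this
    simp [this]
  · obtain ⟨k, hak, hkb, hedge, hsplit⟩ := split_vertex T a b h
    have hsub : innerD T a b ⊆ filterIncl T a k ∪ filterIncl T k b := by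
      intro p hp
      have hpf : p ∈ filterIncl T a b := by
        simp only [innerD, Finset.mem_filter] at hp
        simp only [filterIncl, Finset.mem_filter]
        exact ⟨hp.1, hp.2.1, hp.2.2.1⟩
      have hne : p ≠ (a, b) := by
        simp only [innerD, Finset.mem_filter] at hp
        exact hp.2.2.2
      simp only [innerD, Finset.mem_filter] at hp
      rcases hsplit p hpf with h' | h' | h'
      · simp only [Finset.mem_union, filterIncl, Finset.mem_filter]
        exact Or.inl ⟨hp.1, hp.2.1, h'⟩
      · simp only [Finset.mem_union, filterIncl, Finset.mem_filter]
        exact Or.inr ⟨hp.1, h', hp.2.2.1⟩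
      · exact absurd h' hne
    have hcard := Finset.card_le_card hsub
    have hc2 := Finset.card_union_le (filterIncl T a k) (filterIncl T k b)
    have hL := filterIncl_bound T (k - a) a k (by omega) (by omega)
    have hR := filterIncl_bound T (b - k) k b (by omega) (by omega)
    omega

lemma full_lemma (T : PolyTriangulation n) :
    ∀ d a b, b = a + d → 2 ≤ d → b ≤ n - 1 → Edg T a b →
    (innerD T a b).card = d - 2 →
    ((∀ i, a ≤ i → i + 1 ≤ b → ∃ k, k ≤ n - 1 ∧ k ≠ i ∧ k ≠ i + 1 ∧
        EdgS T i k ∧ EdgS T (i + 1) k)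
      ∧ ∃ k, a < k ∧ k < b ∧ Edg T a k ∧ Edg T k b) := by
  intro d
  induction d using Nat.strong_induction_on with
  | _ d ih =>
    intro a b hb hd hbn hEab hfull
    rcases Nat.lt_or_ge d 3 with hd3 | hd3
    · -- d = 2
      have hd2 : d = 2 := by omega
      subst hd2
      constructor
      · intro i hai hib
        rcases Nat.lt_or_ge i (a + 1) with hia | hia
        · -- i = a : apex is b
          have hia' : i = a := by omega
          subst hia'
          refine ⟨b, by omega, by omega, by omega, Or.inl hEab, ?_⟩
          exact Or.inl ⟨by omega, Or.inl (by omega)⟩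
        · -- i = a + 1 : apex is a
          have hia' : i = a + 1 := by omega
          subst hia'
          refine ⟨a, by omega, by omega, by omega, ?_, ?_⟩
          · exact Or.inr ⟨by omega, Or.inl rfl⟩
          · rw [show a + 1 + 1 = b by omega]
            exact Or.inr hEab
      · exact ⟨a + 1, by omega, by omega, ⟨by omega, Or.inl rfl⟩,
          ⟨by omega, Or.inl (by omega)⟩⟩
    · -- d ≥ 3 : split
      obtain ⟨k, hak, hkb, hedge, hsplit⟩ := split_vertex T a b (by omega)
      have hEak : Edg T a k := by
        rcases hedge with h | h
        · exact ⟨hak, Or.inl h⟩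
        · exact ⟨hak, Or.inr (Or.inl h)⟩
      -- counting
      have hsub : innerD T a b ⊆ filterIncl T a k ∪ filterIncl T k b := by
        intro p hp
        have hpf : p ∈ filterIncl T a b := by
          simp only [innerD, Finset.mem_filter] at hp
          simp only [filterIncl, Finset.mem_filter]
          exact ⟨hp.1, hp.2.1, hp.2.2.1⟩
        have hne : p ≠ (a, b) := by
          simp only [innerD, Finset.mem_filter] at hp
          exact hp.2.2.2
        simp only [innerD, Finset.mem_filter] at hp
        rcases hsplit p hpf with h' | h' | h'
        · simp only [Finset.mem_union, filterIncl, Finset.mem_filter]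
          exact Or.inl ⟨hp.1, hp.2.1, h'⟩
        · simp only [Finset.mem_union, filterIncl, Finset.mem_filter]
          exact Or.inr ⟨hp.1, h', hp.2.2.1⟩
        · exact absurd h' hne
      -- reverse inclusions : both filterIncl's sit inside innerD T a b... need lower bound
      have hrev : filterIncl T a k ∪ filterIncl T k b ⊆ T.diags := by
        intro p hp
        rcases Finset.mem_union.mp hp with h | h <;>
          · simp only [filterIncl, Finset.mem_filter] at h
            exact h.1
      have hcard := Finset.card_le_card hsub
      have hc2 := Finset.card_union_le (filterIncl T a k) (filterIncl T k b)
      have hL := filterIncl_bound T (k - a) a k (by omega) (by omega)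
      have hR := filterIncl_bound T (b - k) k b (by omega) (by omega)
      -- disjointness of the two filterIncls
      have hdisj : Disjoint (filterIncl T a k) (filterIncl T k b) := by
        rw [Finset.disjoint_left]
        intro p hp hp'
        simp only [filterIncl, Finset.mem_filter] at hp hp'
        obtain ⟨hpd, _, h2⟩ := hp
        obtain ⟨_, h1, _⟩ := hp'
        obtain ⟨hlt, _, hgap, _⟩ := T.isDiag p hpd
        omega
      have hcardu : (filterIncl T a k ∪ filterIncl T k b).card =
          (filterIncl T a k).card + (filterIncl T k b).card :=
        Finset.card_union_of_disjoint hdisj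
      -- also the union is inside innerD T a b ∪ {(a,k),(k,b)}... we only need lower bd:
      have hsub2 : filterIncl T a k ∪ filterIncl T k b ⊆ innerD T a b := by
        intro p hp
        have hpd := hrev hp
        obtain ⟨hlt, _, hgap, _⟩ := T.isDiag p hpd
        rcases Finset.mem_union.mp hp with h | h <;>
          simp only [filterIncl, Finset.mem_filter] at h <;>
          · simp only [innerD, Finset.mem_filter]
            refine ⟨hpd, by omega, by omega, ?_⟩
            intro he
            rw [he] at h
            simp at h
            omega
      have hcard2 := Finset.card_le_card hsub2
      -- equalities
      have hLk := filterIncl_card T a k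
      have hRk := filterIncl_card T k b
      have hLin := innerD_bound T a k
      have hRin := innerD_bound T k b
      have hEkb : Edg T k b := by
        rcases Nat.lt_or_ge (b - k) 2 with h2 | h2
        · exact ⟨hkb, Or.inl (by omega)⟩
        · refine ⟨hkb, Or.inr (Or.inl ?_)⟩
          by_contra hmem
          rw [if_neg hmem] at hRk
          omega
      refine ⟨?_, k, hak, hkb, hEak, hEkb⟩
      intro i hai hib
      rcases Nat.lt_or_ge i k with hik | hik
      · -- i + 1 ≤ k side
        rcases Nat.lt_or_ge (k - a) 2 with h2 | h2
        · -- k = a + 1, so i = a, i+1 = k ; apex b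
          have : i = a := by omega
          subst this
          refine ⟨b, by omega, by omega, by omega, Or.inl hEab, ?_⟩
          have : i + 1 = k := by omega
          rw [this]
          exact Or.inl hEkb
        · -- recurse left
          have hLfull : (innerD T a k).card = (k - a) - 2 := by
            have : (a, k) ∈ T.diags := by
              rcases hedge with h | h
              · omega
              · exact h
            rw [if_pos this] at hLk
            omega
          have := (ih (k - a) (by omega) a k (by omega) (by omega) (by omega)
            hEak hLfull).1 i hai (by omega)
          exact this
      · -- k ≤ i side
        rcases Nat.lt_or_ge (b - k) 2 with h2 | h2
        · -- b = k + 1, i = k, apex a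
          have : i = k := by omega
          subst this
          refine ⟨a, by omega, by omega, by omega, Or.inr hEak, ?_⟩
          have : i + 1 = b := by omega
          rw [this]
          exact Or.inr hEab
        · -- recurse right
          have hRfull : (innerD T k b).card = (b - k) - 2 := by
            have : (k, b) ∈ T.diags := by
              rcases hEkb.2 with h | h | h
              · omega
              · exact h
              · exfalso; omega
            rw [if_pos this] at hRk
            omega
          exact (ih (b - k) (by omega) k b (by omega) (by omega) hbn
            hEkb hRfull).1 i hik hib

end Stmt11Aux
namespace Stmt11Aux

variable {n : ℕ}

lemma edg_adj (T : PolyTriangulation n) {x y : ℕ} (hy : y < n) (h : Edg T x y) :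
    T.graph.Adj ⟨x, lt_trans h.1 hy⟩ ⟨y, hy⟩ := by
  obtain ⟨hxy, hcase⟩ := h
  rw [PolyTriangulation.graph, SimpleGraph.fromRel_adj]
  constructor
  · intro he
    have : x = y := congrArg Fin.val he
    omega
  rcases hcase with h | h | h
  · left; left
    show (x + 1) % n = y
    rw [← h]
    exact Nat.mod_eq_of_lt hy
  · left; right
    show ((min x y), (max x y)) ∈ T.diags
    rw [min_eq_left (le_of_lt hxy), max_eq_right (le_of_lt hxy)]
    exact h
  · right; left
    show (y + 1) % n = x
    rw [h.2, h.1, Nat.sub_add_cancel (by omega), Nat.mod_self]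

lemma edgS_adj (T : PolyTriangulation n) {u w : Fin n} (h : EdgS T u.val w.val) :
    T.graph.Adj u w := by
  rcases h with h | h
  · have := edg_adj T w.isLt h
    simpa using this
  · have := (edg_adj T u.isLt h).symm
    simpa using this

lemma val_add_one [NeZero n] (hn : 2 ≤ n) (v : Fin n) :
    (v + 1).val = if v.val = n - 1 then 0 else v.val + 1 := by
  have h1 : (1 : Fin n).val = 1 := by
    rw [Fin.val_one']
    exact Nat.mod_eq_of_lt hn
  rw [Fin.val_add, h1]
  by_cases h : v.val = n - 1
  · rw [if_pos h, h, Nat.sub_add_cancel (by omega : 1 ≤ n), Nat.mod_self]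
  · rw [if_neg h]
    have := v.isLt
    exact Nat.mod_eq_of_lt (by omega)

lemma adj_consec (T : PolyTriangulation n) [NeZero n] (hn : 2 ≤ n) (v : Fin n) :
    T.graph.Adj v (v + 1) := by
  have hva := val_add_one hn v
  have hvlt := v.isLt
  by_cases h : v.val = n - 1
  · rw [if_pos h] at hva
    apply edgS_adj
    right
    rw [hva]
    exact ⟨by omega, Or.inr (Or.inr ⟨rfl, h⟩)⟩
  · rw [if_neg h] at hva
    apply edgS_adj
    left
    rw [hva]
    exact ⟨by omega, Or.inl rfl⟩

/-- Every pair of cyclically consecutive vertices has a common neighbor. -/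
lemma apex (T : PolyTriangulation n) [NeZero n] (hn : 6 ≤ n) (v : Fin n) :
    ∃ k : Fin n, k ≠ v ∧ k ≠ v + 1 ∧ T.graph.Adj v k ∧ T.graph.Adj (v + 1) k := by
  have hva := val_add_one (by omega : 2 ≤ n) v
  have hvlt := v.isLt
  -- top-level fullness
  have hEtop : Edg T 0 (n - 1) := ⟨by omega, Or.inr (Or.inr ⟨rfl, rfl⟩)⟩
  have hinner : innerD T 0 (n - 1) = T.diags := by
    ext p
    simp only [innerD, Finset.mem_filter]
    constructor
    · exact fun h => h.1
    · intro hp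
      obtain ⟨hlt, h2, hgap, hgap2⟩ := T.isDiag p hp
      refine ⟨hp, Nat.zero_le _, by omega, ?_⟩
      intro he
      rw [he] at hlt h2 hgap hgap2
      simp only at hlt h2 hgap hgap2
      omega
  have hfull : (innerD T 0 (n - 1)).card = (n - 1) - 2 := by
    rw [hinner, T.card_eq]; omega
  have hmain := full_lemma T (n - 1) 0 (n - 1) (by omega) (by omega) (le_refl _)
    hEtop hfull
  by_cases hv : v.val = n - 1
  · -- wrap edge (n-1, 0) : use the bounding-chord triangle
    rw [if_pos hv] at hva
    obtain ⟨k, hk1, hk2, hk3, hk4⟩ := hmain.2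
    have hkn : k < n := by omega
    refine ⟨⟨k, hkn⟩, ?_, ?_, ?_, ?_⟩
    · intro he
      have := congrArg Fin.val he
      simp only [hv] at this
      omega
    · intro he
      have := congrArg Fin.val he
      simp only [hva] at this
      omega
    · apply edgS_adj
      right
      show Edg T k v.val
      rw [hv]
      exact hk4
    · apply edgS_adj
      left
      show Edg T (v + 1).val k
      rw [hva]
      exact hk3
  · -- ordinary boundary edge (v.val, v.val + 1)
    rw [if_neg hv] at hva
    obtain ⟨k, hk1, hk2, hk3, hk4, hk5⟩ := hmain.1 v.val (Nat.zero_le _) (by omega)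
    have hkn : k < n := by omega
    refine ⟨⟨k, hkn⟩, ?_, ?_, ?_, ?_⟩
    · intro he
      exact hk2 (congrArg Fin.val he)
    · intro he
      have := congrArg Fin.val he
      rw [hva] at this
      exact hk3 this
    · exact edgS_adj T hk4
    · apply edgS_adj
      show EdgS T (v + 1).val k
      rw [hva]
      exact hk5

end Stmt11Aux
namespace Stmt11Aux

variable {n : ℕ}

open scoped Fin.NatCast

lemma fin_shift_ne [NeZero n] (v : Fin n) (i j : ℕ) (hi : i < n) (hj : j < n)
    (hne : i ≠ j) : v + (i : Fin n) ≠ v + (j : Fin n) := by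
  intro h
  have h2 : (i : Fin n) = (j : Fin n) := add_left_cancel h
  have h3 := congrArg Fin.val h2
  rw [Fin.val_natCast, Fin.val_natCast, Nat.mod_eq_of_lt hi, Nat.mod_eq_of_lt hj] at h3
  exact hne h3

lemma fin_sub_one_eq [NeZero n] (hn : 1 ≤ n) (v : Fin n) :
    v - 1 = v + ((n - 1 : ℕ) : Fin n) := by
  have h : ((n - 1 : ℕ) : Fin n) = -1 := by
    have h1 : ((n - 1 : ℕ) : Fin n) + 1 = 0 := by
      have : ((n - 1 : ℕ) : Fin n) + ((1 : ℕ) : Fin n) = ((n - 1 + 1 : ℕ) : Fin n) :=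
        (Nat.cast_add _ _).symm
      rw [Nat.cast_one] at this
      rw [this, Nat.sub_add_cancel hn, Fin.natCast_self]
    exact eq_neg_of_add_eq_zero_left h1
  rw [h, sub_eq_add_neg]

lemma fin_one_eq [NeZero n] : (1 : Fin n) = ((1 : ℕ) : Fin n) := by
  rw [Nat.cast_one]

lemma fin_two_eq [NeZero n] : (1 : Fin n) + 1 = ((2 : ℕ) : Fin n) := by
  rw [show ((2:ℕ) : Fin n) = ((1:ℕ) : Fin n) + ((1:ℕ) : Fin n) from by
    rw [← Nat.cast_add], Nat.cast_one]

lemma idx_succ [NeZero n] (hn : 2 ≤ n) (v : Fin n) :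
    ((v + 1).val + n - v.val) % n = 1 := by
  have hva := val_add_one hn v
  have hvlt := v.isLt
  by_cases h : v.val = n - 1
  · rw [if_pos h] at hva
    rw [hva, h]
    have : 0 + n - (n - 1) = 1 := by omega
    rw [this]
    exact Nat.mod_eq_of_lt hn
  · rw [if_neg h] at hva
    rw [hva]
    have : v.val + 1 + n - v.val = n + 1 := by omega
    rw [this, Nat.add_mod_left]
    exact Nat.mod_eq_of_lt hn

lemma idx_pred [NeZero n] (hn : 2 ≤ n) (v : Fin n) :
    (v.val + n - (v + 1).val) % n = n - 1 := by
  have hva := val_add_one hn v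
  have hvlt := v.isLt
  by_cases h : v.val = n - 1
  · rw [if_pos h] at hva
    rw [hva, h]
    have : n - 1 + n - 0 = n + (n - 1) := by omega
    rw [this, Nat.add_mod_left]
    exact Nat.mod_eq_of_lt (by omega)
  · rw [if_neg h] at hva
    rw [hva]
    have : v.val + n - (v.val + 1) = n - 1 := by omega
    rw [this]
    exact Nat.mod_eq_of_lt (by omega)

lemma idx_facts [NeZero n] (hn : 2 ≤ n) (v k : Fin n) (h0 : k ≠ v) (h1 : k ≠ v + 1) :
    2 ≤ (k.val + n - v.val) % n ∧
    (k.val + n - (v + 1).val) % n = (k.val + n - v.val) % n - 1 := by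
  have hva := val_add_one hn v
  have hvlt := v.isLt
  have hklt := k.isLt
  have hkv : k.val ≠ v.val := fun h => h0 (Fin.ext h)
  have hkv1 : k.val ≠ (v + 1).val := fun h => h1 (Fin.ext h)
  by_cases h : v.val = n - 1
  · rw [if_pos h] at hva
    rw [hva] at hkv1 ⊢
    rw [h]
    have e1 : k.val + n - (n - 1) = k.val + 1 := by omega
    have e2 : k.val + n - 0 = k.val + n := by omega
    rw [e1, e2]
    have h3 : (k.val + 1) % n = k.val + 1 := Nat.mod_eq_of_lt (by omega)
    have h4 : (k.val + n) % n = k.val := by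
      rw [Nat.add_mod_right]
      exact Nat.mod_eq_of_lt hklt
    rw [h3, h4]
    omega
  · rw [if_neg h] at hva
    rw [hva] at hkv1 ⊢
    rcases Nat.lt_or_ge k.val v.val with hlt | hge
    · have e1 : (k.val + n - v.val) % n = k.val + n - v.val :=
        Nat.mod_eq_of_lt (by omega)
      have e2 : (k.val + n - (v.val + 1)) % n = k.val + n - (v.val + 1) :=
        Nat.mod_eq_of_lt (by omega)
      rw [e1, e2]
      omega
    · have hgt : v.val < k.val := by omega
      have e1 : k.val + n - v.val = n + (k.val - v.val) := by omega
      have e2 : k.val + n - (v.val + 1) = n + (k.val - v.val - 1) := by omega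
      rw [e1, e2, Nat.add_mod_left, Nat.add_mod_left,
        Nat.mod_eq_of_lt (by omega), Nat.mod_eq_of_lt (by omega)]
      omega

/-- No two cyclically consecutive vertices are both special. -/
lemma not_consec (T : PolyTriangulation n) [NeZero n] (hn : 6 ≤ n) (hmod : n % 4 = 2)
    (v : Fin n) (hv : pdeg T v = 2 ∨ IsCentral T v)
    (hv1 : pdeg T (v + 1) = 2 ∨ IsCentral T (v + 1)) : False := by
  have hn2 : (2 : ℕ) ≤ n := by omega
  have hadj : T.graph.Adj v (v + 1) := adj_consec T hn2 v
  rcases hv with hd | hc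
  · rcases hv1 with hd' | hc'
    · -- both degree 2
      obtain ⟨k, hk1, hk2, hk3, hk4⟩ := apex T hn v
      -- neighbors of v are exactly {v - 1, v + 1}
      have hm1 : v - 1 ∈ T.graph.neighborSet v := by
        rw [SimpleGraph.mem_neighborSet]
        have := adj_consec T hn2 (v - 1)
        rw [sub_add_cancel] at this
        exact this.symm
      have hm2 : v + 1 ∈ T.graph.neighborSet v := hadj
      have hne12 : v - 1 ≠ v + 1 := by
        rw [fin_sub_one_eq (by omega) v, fin_one_eq]
        exact fin_shift_ne v (n - 1) 1 (by omega) (by omega) (by omega)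
      have hsub : ({v - 1, v + 1} : Set (Fin n)) ⊆ T.graph.neighborSet v := by
        intro x hx
        rcases hx with h | h
        · rw [h]; exact hm1
        · rw [h]; exact hm2
      have hpair : ({v - 1, v + 1} : Set (Fin n)).ncard = 2 := Set.ncard_pair hne12
      have heq : ({v - 1, v + 1} : Set (Fin n)) = T.graph.neighborSet v := by
        apply Set.eq_of_subset_of_ncard_le hsub _ (Set.toFinite _)
        rw [hpair]
        exact le_of_eq hd
      have hkmem : k ∈ T.graph.neighborSet v := hk3
      rw [← heq] at hkmem
      have hkval : k = v - 1 := by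
        rcases hkmem with h | h
        · exact h
        · exact absurd h hk2
      -- now v + 1 has at least three neighbors
      have hT1 : v - 1 ∈ T.graph.neighborSet (v + 1) := by
        rw [SimpleGraph.mem_neighborSet, ← hkval]
        exact hk4
      have hT2 : v ∈ T.graph.neighborSet (v + 1) := hadj.symm
      have hT3 : v + 1 + 1 ∈ T.graph.neighborSet (v + 1) := adj_consec T hn2 (v + 1)
      have hsub3 : ({v - 1, v, v + 1 + 1} : Set (Fin n)) ⊆ T.graph.neighborSet (v + 1) := by
        intro x hx
        rcases hx with h | h | h
        · rw [h]; exact hT1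
        · rw [h]; exact hT2
        · rw [h]; exact hT3
      have hd1 : v - 1 ≠ v := by
        rw [fin_sub_one_eq (by omega) v]
        have := fin_shift_ne v (n - 1) 0 (by omega) (by omega) (by omega)
        rwa [Nat.cast_zero, add_zero] at this
      have hd2 : v - 1 ≠ v + 1 + 1 := by
        rw [fin_sub_one_eq (by omega) v, add_assoc, fin_two_eq]
        exact fin_shift_ne v (n - 1) 2 (by omega) (by omega) (by omega)
      have hd3 : v ≠ v + 1 + 1 := by
        rw [add_assoc, fin_two_eq]
        have := fin_shift_ne v 0 2 (by omega) (by omega) (by omega)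
        rwa [Nat.cast_zero, add_zero] at this
      have h3 : ({v - 1, v, v + 1 + 1} : Set (Fin n)).ncard = 3 := by
        rw [Set.ncard_insert_of_notMem (by simp [hd1, hd2]) (Set.toFinite _),
          Set.ncard_insert_of_notMem (by simp [hd3]) (Set.toFinite _),
          Set.ncard_singleton]
      have hle := Set.ncard_le_ncard hsub3 (Set.toFinite _)
      rw [h3] at hle
      have : pdeg T (v + 1) = (T.graph.neighborSet (v + 1)).ncard := rfl
      omega
    · -- v degree 2, v+1 central
      exact hc'.1 v (Or.inr hadj.symm) hd
  · rcases hv1 with hd' | hc'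
    · -- v central, v+1 degree 2
      exact hc.1 (v + 1) (Or.inr hadj) hd'
    · -- both central
      obtain ⟨k, hk1, hk2, hk3, hk4⟩ := apex T hn v
      have e1 := hc.2 k (v + 1) hk3 hadj
      rw [idx_succ hn2 v] at e1
      have e2 := hc'.2 k v hk4 hadj.symm
      rw [idx_pred hn2 v] at e2
      obtain ⟨hge2, hshift⟩ := idx_facts hn2 v k hk1 hk2
      rw [hshift] at e2
      omega

end Stmt11Aux
namespace Stmt11Aux

variable {n : ℕ}

lemma n2_case (T : PolyTriangulation 2) (v : Fin 2) : IsCentral T v := by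
  constructor
  · intro u _
    have hsub : T.graph.neighborSet u ⊆ {u + 1} := by
      intro w hw
      rw [SimpleGraph.mem_neighborSet] at hw
      have hne := hw.ne
      have h1 := u.isLt
      have h2 := w.isLt
      have h3 : u.val ≠ w.val := fun h => hne (Fin.ext h)
      have : w = u + 1 := by
        apply Fin.ext
        rw [Fin.val_add]
        have : (1 : Fin 2).val = 1 := rfl
        rw [this]
        omega
      simp [this]
    have := Set.ncard_le_ncard hsub (Set.toFinite _)
    rw [Set.ncard_singleton] at this
    have hpd : pdeg T u = (T.graph.neighborSet u).ncard := rfl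
    omega
  · intro u w hu hw
    have h1 := u.isLt
    have h2 := w.isLt
    have h3 : u.val ≠ v.val := fun h => hu.ne' (Fin.ext h)
    have h4 : w.val ≠ v.val := fun h => hw.ne' (Fin.ext h)
    have : u = w := Fin.ext (by omega)
    rw [this]

end Stmt11Aux

open Stmt11Aux
open scoped Fin.NatCast

/-- in a generalized sun graph, the degree-2 vertices and central
vertices occupy exactly every second position along the outer Hamiltonian cycle:
for some starting vertex `s`, a vertex is of degree 2 or central iff its cyclic
index relative to `s` is odd. -/
theorem stmt11 (n : ℕ) (T : PolyTriangulation n) (hs : IsGenSun T) :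
    ∃ s : Fin n, ∀ v : Fin n,
      (pdeg T v = 2 ∨ IsCentral T v) ↔ ((v.val + n - s.val) % n) % 2 = 1 := by
  obtain ⟨hmod, hcount⟩ := hs
  by_cases hn2 : n = 2
  · -- degenerate case: the hypothesis is contradictory
    exfalso
    subst hn2
    have huniv : {v : Fin 2 | IsCentral T v} = Set.univ := by
      ext v; simp [n2_case T v]
    rw [huniv, Set.ncard_univ, Nat.card_eq_fintype_card, Fintype.card_fin] at hcount
    omega
  · have hn : 6 ≤ n := by omega
    haveI : NeZero n := ⟨by omega⟩
    set A : Set (Fin n) := {v : Fin n | pdeg T v = 2 ∨ IsCentral T v} with hA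
    have hAcard : A.ncard = n / 2 := by
      have hAu : A = {v : Fin n | pdeg T v = 2} ∪ {v : Fin n | IsCentral T v} := by
        ext v; simp [hA, Set.mem_setOf_eq]
      have hdisj : Disjoint {v : Fin n | pdeg T v = 2} {v : Fin n | IsCentral T v} := by
        rw [Set.disjoint_left]
        intro v hv hv'
        exact hv'.1 v (Or.inl rfl) hv
      rw [hAu, Set.ncard_union_eq hdisj (Set.toFinite _) (Set.toFinite _), hcount]
    have hstep : ∀ v : Fin n, v ∈ A → v + 1 ∉ A := by
      intro v hv hv1
      exact not_consec T hn hmod v hv hv1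
    -- complement has the same size and equals A + 1
    have hcompl : A.ncard + Aᶜ.ncard = n := by
      rw [Set.ncard_add_ncard_compl, Nat.card_eq_fintype_card, Fintype.card_fin]
    have hinj : Function.Injective (fun v : Fin n => v + 1) := fun a b h =>
      add_right_cancel h
    set B : Set (Fin n) := (fun v : Fin n => v + 1) '' A with hB
    have hBsub : B ⊆ Aᶜ := by
      rintro _ ⟨u, hu, rfl⟩
      exact hstep u hu
    have hBcard : B.ncard = n / 2 := by
      rw [hB, Set.ncard_image_of_injective _ hinj, hAcard]
    have hBeq : B = Aᶜ := by
      apply Set.eq_of_subset_of_ncard_le hBsub _ (Set.toFinite _)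
      rw [hBcard]
      omega
    have hstep2 : ∀ v : Fin n, v ∉ A → v + 1 ∈ A := by
      intro v hv
      by_contra hv1
      have : v + 1 ∈ Aᶜ := hv1
      rw [← hBeq] at this
      obtain ⟨u, hu, he⟩ := this
      have : u = v := add_right_cancel he
      rw [this] at hu
      exact hv hu
    -- A is nonempty
    have hne : A.Nonempty := by
      apply Set.nonempty_of_ncard_ne_zero
      rw [hAcard]
      omega
    obtain ⟨a, ha⟩ := hne
    refine ⟨a - 1, ?_⟩
    have hs_notin : a - 1 ∉ A := by
      intro h
      have := hstep _ h
      rw [sub_add_cancel] at this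
      exact this ha
    have claim : ∀ j : ℕ, ((a - 1) + (j : Fin n) ∈ A) ↔ j % 2 = 1 := by
      intro j
      induction j with
      | zero =>
        rw [Nat.cast_zero, add_zero]
        exact iff_of_false hs_notin (by omega)
      | succ j ih =>
        have hcast : ((j + 1 : ℕ) : Fin n) = (j : Fin n) + 1 := by
          rw [Nat.cast_add, Nat.cast_one]
        rw [hcast, ← add_assoc]
        by_cases hj : j % 2 = 1
        · have hmem : (a - 1) + (j : Fin n) ∈ A := ih.mpr hj
          exact iff_of_false (hstep _ hmem) (by omega)
        · have hmem : (a - 1) + (j : Fin n) ∉ A := fun h => hj (ih.mp h)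
          exact iff_of_true (hstep2 _ hmem) (by omega)
    intro v
    set s : Fin n := a - 1 with hsdef
    have hslt := s.isLt
    have hvlt := v.isLt
    set j : ℕ := (v.val + n - s.val) % n with hj
    have hjlt : j < n := Nat.mod_lt _ (by omega)
    have key : v = s + (j : Fin n) := by
      apply Fin.ext
      rw [Fin.val_add, Fin.val_natCast, Nat.mod_eq_of_lt hjlt, hj]
      symm
      conv_lhs => rw [Nat.add_mod]
      rw [Nat.mod_mod_of_dvd _ dvd_rfl, ← Nat.add_mod]
      have : s.val + (v.val + n - s.val) = v.val + n := by omega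
      rw [this, Nat.add_mod_right]
      exact Nat.mod_eq_of_lt hvlt
    have hiff := claim j
    rw [← key] at hiff
    exact hiff
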